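/- Suppose ψ : I → ℝ is strictly convex, three times differentiable and satisfies |ψ'''(u)| ≤ c·(ψ''(u))^{3/2} on an open interval I, with ψ'' > 0 on I. Let φ = ψ* be its Fenchel conjugate, assumed three times differentiable on the interior of its domain. Then φ also satisfies |φ'''(t)| ≤ c·(φ''(t))^{3/2} at every point t where φ'(t) ∈ I; moreover φ''(ψ'(u))·ψ''(u) = 1 whenever t = ψ'(u). -/

import Mathlib

open Filter Topology Set

lemma aux_right (f : ℝ → ℝ) (a : ℝ) (hf : ContDiffAt ℝ 3 f a)
    (hz : ∀ s, a < s → f s = 0) :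
    iteratedDeriv 2 f a = 0 ∧ iteratedDeriv 3 f a = 0 := by
  have h2f : iteratedDeriv 2 f = deriv (deriv f) := by
    rw [iteratedDeriv_succ, iteratedDeriv_one]
  have h3f : iteratedDeriv 3 f = deriv (deriv (deriv f)) := by
    rw [iteratedDeriv_succ, iteratedDeriv_succ, iteratedDeriv_one]
  obtain ⟨V, hVmem, hVf⟩ : ∃ V ∈ 𝓝 a, ContDiffOn ℝ 3 f V := hf.contDiffOn le_rfl (by norm_num)
  obtain ⟨U, hUV, hUopen, haU⟩ := mem_nhds_iff.mp hVmem
  have hUf : ContDiffOn ℝ 3 f U := hVf.mono hUV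
  have hUf1 : ContDiffOn ℝ 2 (deriv f) U := hUf.deriv_of_isOpen hUopen (by norm_num)
  have hUf2 : ContDiffOn ℝ 1 (deriv (deriv f)) U := hUf1.deriv_of_isOpen hUopen (by norm_num)
  have hz1 : ∀ s, a < s → deriv f s = 0 := by
    intro s hs
    have hev : f =ᶠ[𝓝 s] (fun _ => (0:ℝ)) := by
      filter_upwards [isOpen_Ioi.mem_nhds (show s ∈ Ioi a from hs)] with x hx
      exact hz x hx
    rw [hev.deriv_eq, deriv_const]
  have hz2 : ∀ s, a < s → deriv (deriv f) s = 0 := by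
    intro s hs
    have hev : deriv f =ᶠ[𝓝 s] (fun _ => (0:ℝ)) := by
      filter_upwards [isOpen_Ioi.mem_nhds (show s ∈ Ioi a from hs)] with x hx
      exact hz1 x hx
    rw [hev.deriv_eq, deriv_const]
  have limzero : ∀ g : ℝ → ℝ, ContinuousAt g a → (∀ s, a < s → g s = 0) → g a = 0 := by
    intro g hg hgz
    have h1 : Tendsto g (𝓝[>] a) (𝓝 (g a)) := (hg.continuousWithinAt).tendsto
    have h2 : Tendsto g (𝓝[>] a) (𝓝 0) := by
      apply Tendsto.congr' _ tendsto_const_nhds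
      filter_upwards [eventually_mem_nhdsWithin] with x hx
      exact (hgz x hx).symm
    exact tendsto_nhds_unique h1 h2
  have hf1a : deriv f a = 0 :=
    limzero _ ((hUf1.contDiffAt (hUopen.mem_nhds haU)).continuousAt) hz1
  have hf2a : deriv (deriv f) a = 0 :=
    limzero _ ((hUf2.contDiffAt (hUopen.mem_nhds haU)).continuousAt) hz2
  refine ⟨by rw [h2f]; exact hf2a, ?_⟩
  rw [h3f]
  have hdiff : DifferentiableAt ℝ (deriv (deriv f)) a :=
    (hUf2.contDiffAt (hUopen.mem_nhds haU)).differentiableAt (by norm_num)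
  have hd : HasDerivWithinAt (deriv (deriv f)) (deriv (deriv (deriv f)) a) (Ici a) a :=
    hdiff.hasDerivAt.hasDerivWithinAt
  have hzero : HasDerivWithinAt (deriv (deriv f)) 0 (Ici a) a := by
    have hc : HasDerivWithinAt (fun _ : ℝ => (0:ℝ)) 0 (Ici a) a := (hasDerivAt_const a (0:ℝ)).hasDerivWithinAt
    apply hc.congr
    · intro x hx
      rcases eq_or_lt_of_le (show a ≤ x from hx) with rfl | hlt
      · exact hf2a
      · exact hz2 x hlt
    · exact hf2a
  exact (uniqueDiffOn_Ici a a Set.self_mem_Ici).eq_deriv _ hd hzero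

lemma aux_left (f : ℝ → ℝ) (a : ℝ) (hf : ContDiffAt ℝ 3 f a)
    (hz : ∀ s, s < a → f s = 0) :
    iteratedDeriv 2 f a = 0 ∧ iteratedDeriv 3 f a = 0 := by
  have hg : ContDiffAt ℝ 3 (fun x => f (-x)) (-a) := by
    have : ContDiffAt ℝ 3 Neg.neg (-a) := (contDiff_neg).contDiffAt
    exact ContDiffAt.comp (-a) (by simpa using hf) this
  have hgz : ∀ s, -a < s → (fun x => f (-x)) s = 0 := by
    intro s hs
    exact hz (-s) (by linarith)
  obtain ⟨h2, h3⟩ := aux_right _ _ hg hgz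
  rw [iteratedDeriv_comp_neg] at h2 h3
  constructor
  · simpa using h2
  · simpa using h3


lemma nice_lemma (I : Set ℝ) (hI : IsOpen I) (ψ φ : ℝ → ℝ)
    (hψ : ContDiffOn ℝ 3 ψ I)
    (hdpos : ∀ u ∈ I, 0 < deriv (deriv ψ) u)
    (φval : ∀ u ∈ I, φ (deriv ψ u) = deriv ψ u * u - ψ u)
    (u : ℝ) (hu : u ∈ I) :
    deriv φ (deriv ψ u) = u ∧
    deriv (deriv φ) (deriv ψ u) = (deriv (deriv ψ) u)⁻¹ ∧
    deriv (deriv (deriv φ)) (deriv ψ u) =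
      -(deriv (deriv (deriv ψ)) u) / (deriv (deriv ψ) u) ^ 3 := by
  have hdψ : ContDiffOn ℝ 2 (deriv ψ) I := hψ.deriv_of_isOpen hI (by norm_num)
  have hψdiff : ∀ v ∈ I, DifferentiableAt ℝ ψ v := fun v hv =>
    (hψ.contDiffAt (hI.mem_nhds hv)).differentiableAt (by norm_num)
  have hdψdiff : ∀ v ∈ I, DifferentiableAt ℝ (deriv ψ) v := fun v hv =>
    (hdψ.contDiffAt (hI.mem_nhds hv)).differentiableAt (by norm_num)
  have hd2ψ : ContDiffOn ℝ 1 (deriv (deriv ψ)) I := hdψ.deriv_of_isOpen hI (by norm_num)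
  have hd2ψdiff : ∀ v ∈ I, DifferentiableAt ℝ (deriv (deriv ψ)) v := fun v hv =>
    (hd2ψ.contDiffAt (hI.mem_nhds hv)).differentiableAt (by norm_num)
  set t := deriv ψ u with ht
  set d := deriv (deriv ψ) u with hd
  have hdp : 0 < d := hdpos u hu
  have hcd : ContDiffAt ℝ 2 (deriv ψ) u := hdψ.contDiffAt (hI.mem_nhds hu)
  set e : ℝ ≃L[ℝ] ℝ := ContinuousLinearEquiv.unitsEquivAut ℝ (Units.mk0 d hdp.ne') with he
  have hfd : HasFDerivAt (deriv ψ) (e : ℝ →L[ℝ] ℝ) u := by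
    have h1 : HasDerivAt (deriv ψ) d u := (hdψdiff u hu).hasDerivAt
    have h2 := h1.hasFDerivAt
    have he' : (e : ℝ →L[ℝ] ℝ) = ContinuousLinearMap.toSpanSingleton ℝ d := by
      ext
      simp [he]
    rw [he']
    exact h2
  have hn12 : (2 : WithTop ℕ∞) ≠ 0 := by norm_num
  set G : ℝ → ℝ := hcd.localInverse hfd hn12 with hGdef
  have hGsmooth : ContDiffAt ℝ 2 G t := hcd.to_localInverse hfd hn12
  have hGu : G t = u := hcd.localInverse_apply_image hfd hn12
  have hright : ∀ᶠ s in 𝓝 t, deriv ψ (G s) = s :=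
    (hcd.hasStrictFDerivAt' hfd hn12).eventually_right_inverse
  have hGI : ∀ᶠ s in 𝓝 t, G s ∈ I :=
    hGsmooth.continuousAt.preimage_mem_nhds (hI.mem_nhds (by rw [hGu]; exact hu))
  have hev : ∀ᶠ s in 𝓝 t, φ s = s * G s - ψ (G s) := by
    filter_upwards [hright, hGI] with s h1 h2
    have := φval (G s) h2
    rw [h1] at this
    exact this
  have hGdiff_ev : ∀ᶠ s in 𝓝 t, DifferentiableAt ℝ G s := by
    filter_upwards [hGsmooth.eventually (by norm_num)] with s hs
    exact hs.differentiableAt (by norm_num)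
  have hderivφ : deriv φ =ᶠ[𝓝 t] G := by
    filter_upwards [hev.eventually_nhds, hright, hGI, hGdiff_ev] with s hseq hsr hsI hsd
    have hGd : HasDerivAt G (deriv G s) s := hsd.hasDerivAt
    have h1 : HasDerivAt (fun x => x * G x) (1 * G s + s * deriv G s) s :=
      (hasDerivAt_id s).mul hGd
    have h2 : HasDerivAt (fun x => ψ (G x)) (deriv ψ (G s) * deriv G s) s :=
      ((hψdiff (G s) hsI).hasDerivAt).comp s hGd
    have h3 := h1.sub h2
    have h4 : HasDerivAt φ (1 * G s + s * deriv G s - deriv ψ (G s) * deriv G s) s :=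
      h3.congr_of_eventuallyEq hseq
    rw [h4.deriv, hsr]
    ring
  have hφt : deriv φ t = u := by rw [hderivφ.eq_of_nhds, hGu]
  have hGinv : deriv G =ᶠ[𝓝 t] fun s => (deriv (deriv ψ) (G s))⁻¹ := by
    filter_upwards [hright.eventually_nhds, hGI, hGdiff_ev] with s hsr hsI hsd
    have hGd : HasDerivAt G (deriv G s) s := hsd.hasDerivAt
    have hcomp : HasDerivAt (fun x => deriv ψ (G x)) (deriv (deriv ψ) (G s) * deriv G s) s :=
      ((hdψdiff (G s) hsI).hasDerivAt).comp s hGd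
    have hid : HasDerivAt (fun x => deriv ψ (G x)) 1 s := by
      refine (hasDerivAt_id s).congr_of_eventuallyEq ?_
      filter_upwards [hsr] with x hx
      exact hx
    have hone : deriv (deriv ψ) (G s) * deriv G s = 1 := hcomp.unique hid
    have hone' : deriv G s * deriv (deriv ψ) (G s) = 1 := by rw [mul_comm]; exact hone
    exact eq_inv_of_mul_eq_one_left hone'
  have hd2φ : deriv (deriv φ) t = d⁻¹ := by
    rw [hderivφ.deriv_eq, hGinv.eq_of_nhds, hGu]
  refine ⟨hφt, hd2φ, ?_⟩
  have e1 : deriv (deriv φ) =ᶠ[𝓝 t] deriv G := hderivφ.deriv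
  rw [e1.deriv_eq, hGinv.deriv_eq]
  have hGt : deriv G t = d⁻¹ := by rw [hGinv.eq_of_nhds, hGu]
  have hGd : HasDerivAt G d⁻¹ t := hGt ▸ (hGsmooth.differentiableAt (by norm_num)).hasDerivAt
  have hq' : HasDerivAt (deriv (deriv ψ)) (deriv (deriv (deriv ψ)) u) (G t) := by
    rw [hGu]; exact (hd2ψdiff u hu).hasDerivAt
  have hcomp := hq'.comp t hGd
  have hne : (deriv (deriv ψ) ∘ G) t ≠ 0 := by
    simp only [Function.comp_apply, hGu]
    exact hdp.ne'
  have hinv := (hcomp.inv hne).deriv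
  simp only [Function.comp_def, Pi.inv_def] at hinv
  rw [hinv]
  simp only [hGu]
  rw [← hd]
  rw [div_eq_div_iff (by positivity) (by positivity)]
  field_simp



/-- Canonical self-concordance is preserved under Fenchel conjugation:
if ψ satisfies |ψ'''| ≤ c·(ψ'')^{3/2} with ψ'' > 0 on an open interval I, then its
Fenchel conjugate φ satisfies the same bound wherever φ'(t) ∈ I; moreover
φ''(ψ'(u))·ψ''(u) = 1 for u ∈ I. -/
theorem stmt_9 (I : Set ℝ) (hI : IsOpen I) (ψ φ : ℝ → ℝ) (c : ℝ) (hc : 0 ≤ c)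
    (hψ : ContDiffOn ℝ 3 ψ I) (hconv : StrictConvexOn ℝ I ψ)
    (hψ'' : ∀ u ∈ I, 0 < iteratedDeriv 2 ψ u)
    (hsc : ∀ u ∈ I, |iteratedDeriv 3 ψ u| ≤ c * (iteratedDeriv 2 ψ u) ^ (3/2 : ℝ))
    (hφ : ∀ t, φ t = sSup ((fun u => t * u - ψ u) '' I))
    (hφdiff : ∀ t, deriv φ t ∈ I → ContDiffAt ℝ 3 φ t) :
    (∀ t, deriv φ t ∈ I →
      |iteratedDeriv 3 φ t| ≤ c * (iteratedDeriv 2 φ t) ^ (3/2 : ℝ)) ∧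
    (∀ u ∈ I, iteratedDeriv 2 φ (deriv ψ u) * iteratedDeriv 2 ψ u = 1) := by
  have h2ψ : iteratedDeriv 2 ψ = deriv (deriv ψ) := by
    rw [iteratedDeriv_succ, iteratedDeriv_one]
  have h3ψ : iteratedDeriv 3 ψ = deriv (deriv (deriv ψ)) := by
    rw [iteratedDeriv_succ, iteratedDeriv_succ, iteratedDeriv_one]
  have h2φ : iteratedDeriv 2 φ = deriv (deriv φ) := by
    rw [iteratedDeriv_succ, iteratedDeriv_one]
  have h3φ : iteratedDeriv 3 φ = deriv (deriv (deriv φ)) := by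
    rw [iteratedDeriv_succ, iteratedDeriv_succ, iteratedDeriv_one]
  have hconvI : Convex ℝ I := hconv.1
  have hdψ : ContDiffOn ℝ 2 (deriv ψ) I := hψ.deriv_of_isOpen hI (by norm_num)
  have hψdiff : ∀ u ∈ I, DifferentiableAt ℝ ψ u := fun u hu =>
    (hψ.contDiffAt (hI.mem_nhds hu)).differentiableAt (by norm_num)
  have hdpos : ∀ u ∈ I, 0 < deriv (deriv ψ) u := fun u hu => h2ψ ▸ hψ'' u hu
  -- gradient inequality: maximizer of v ↦ ψ'(u)*v - ψ(v) is u
  have key_le : ∀ u ∈ I, ∀ v ∈ I, deriv ψ u * v - ψ v ≤ deriv ψ u * u - ψ u := by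
    intro u hu v hv
    rcases lt_trichotomy v u with hvu | rfl | huv
    · have h1 := hconv.convexOn.slope_le_deriv hv hu hvu (hψdiff u hu)
      rw [slope_def_field] at h1
      have h2 : ψ u - ψ v ≤ deriv ψ u * (u - v) := by
        rw [div_le_iff₀ (by linarith)] at h1
        linarith
      nlinarith
    · exact le_rfl
    · have h1 := hconv.convexOn.deriv_le_slope hu hv huv (hψdiff u hu)
      rw [slope_def_field] at h1
      have h2 : deriv ψ u * (v - u) ≤ ψ v - ψ u := by
        rw [le_div_iff₀ (by linarith)] at h1
        linarith
      nlinarith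
  have bdd : ∀ u ∈ I, BddAbove ((fun v => deriv ψ u * v - ψ v) '' I) := by
    intro u hu
    refine ⟨deriv ψ u * u - ψ u, ?_⟩
    rintro x ⟨v, hv, rfl⟩
    exact key_le u hu v hv
  have φval : ∀ u ∈ I, φ (deriv ψ u) = deriv ψ u * u - ψ u := by
    intro u hu
    rw [hφ]
    apply le_antisymm
    · refine csSup_le ⟨_, u, hu, rfl⟩ ?_
      rintro x ⟨v, hv, rfl⟩
      exact key_le u hu v hv
    · exact le_csSup (bdd u hu) ⟨u, hu, rfl⟩
  have nice := nice_lemma I hI ψ φ hψ hdpos φval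
  -- Part 2
  have part2 : ∀ u ∈ I, iteratedDeriv 2 φ (deriv ψ u) * iteratedDeriv 2 ψ u = 1 := by
    intro u hu
    rw [h2φ, h2ψ, (nice u hu).2.1]
    exact inv_mul_cancel₀ (hdpos u hu).ne'
  refine ⟨?_, part2⟩
  -- Part 1
  intro t₀ h
  set u₀ := deriv φ t₀ with hu₀
  set D := {s : ℝ | BddAbove ((fun v => s * v - ψ v) '' I)} with hDdef
  have hDconv : Convex ℝ D := by
    intro s₁ h₁ s₂ h₂ a b ha hb hab
    obtain ⟨M₁, hM₁⟩ := h₁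
    obtain ⟨M₂, hM₂⟩ := h₂
    refine ⟨a * M₁ + b * M₂, ?_⟩
    rintro x ⟨v, hv, rfl⟩
    have e₁ : s₁ * v - ψ v ≤ M₁ := hM₁ ⟨v, hv, rfl⟩
    have e₂ : s₂ * v - ψ v ≤ M₂ := hM₂ ⟨v, hv, rfl⟩
    have hsmul : (a • s₁ + b • s₂) * v - ψ v
        = a * (s₁ * v - ψ v) + b * (s₂ * v - ψ v) := by
      simp only [smul_eq_mul]
      linear_combination (ψ v) * hab
    show (a • s₁ + b • s₂) * v - ψ v ≤ a * M₁ + b * M₂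
    rw [hsmul]
    exact add_le_add (mul_le_mul_of_nonneg_left e₁ ha) (mul_le_mul_of_nonneg_left e₂ hb)
  have hID : ∀ u ∈ I, deriv ψ u ∈ D := fun u hu => bdd u hu
  have hφconvD : ConvexOn ℝ D φ := by
    refine ⟨hDconv, ?_⟩
    intro s₁ h₁ s₂ h₂ a b ha hb hab
    rw [hφ]
    refine csSup_le ⟨_, u₀, h, rfl⟩ ?_
    rintro x ⟨v, hv, rfl⟩
    have e₁ : s₁ * v - ψ v ≤ φ s₁ := by rw [hφ]; exact le_csSup h₁ ⟨v, hv, rfl⟩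
    have e₂ : s₂ * v - ψ v ≤ φ s₂ := by rw [hφ]; exact le_csSup h₂ ⟨v, hv, rfl⟩
    have hsmul : (a • s₁ + b • s₂) * v - ψ v
        = a * (s₁ * v - ψ v) + b * (s₂ * v - ψ v) := by
      simp only [smul_eq_mul]
      linear_combination (ψ v) * hab
    show (a • s₁ + b • s₂) * v - ψ v ≤ a • φ s₁ + b • φ s₂
    rw [hsmul]
    simp only [smul_eq_mul]
    exact add_le_add (mul_le_mul_of_nonneg_left e₁ ha) (mul_le_mul_of_nonneg_left e₂ hb)
  by_cases hint : t₀ ∈ interior D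
  · -- interior case : t₀ = deriv ψ u₀
    have hDt₀ : t₀ ∈ D := interior_subset hint
    set t₁ := deriv ψ u₀ with ht₁
    have hDt₁ : t₁ ∈ D := hID u₀ h
    have hφt₁ : φ t₁ = t₁ * u₀ - ψ u₀ := φval u₀ h
    have hdφ : DifferentiableAt ℝ φ t₀ := (hφdiff t₀ h).differentiableAt (by norm_num)
    have hupper : φ t₀ ≤ t₀ * u₀ - ψ u₀ := by
      rcases lt_trichotomy t₀ t₁ with hlt | heq | hgt
      · have h1 := hφconvD.deriv_le_slope hDt₀ hDt₁ hlt hdφ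
        rw [slope_def_field, ← hu₀] at h1
        rw [le_div_iff₀ (by linarith)] at h1
        nlinarith
      · rw [heq, hφt₁]
      · have h1 := hφconvD.slope_le_deriv hDt₁ hDt₀ hgt hdφ
        rw [slope_def_field, ← hu₀] at h1
        rw [div_le_iff₀ (by linarith)] at h1
        nlinarith
    have hmax : ∀ᶠ v in 𝓝 u₀, t₀ * v - ψ v ≤ t₀ * u₀ - ψ u₀ := by
      filter_upwards [hI.mem_nhds h] with v hv
      have h1 : t₀ * v - ψ v ≤ φ t₀ := by rw [hφ]; exact le_csSup hDt₀ ⟨v, hv, rfl⟩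
      linarith
    have hloc : IsLocalMax (fun v => t₀ * v - ψ v) u₀ := hmax
    have hd0 : deriv (fun v => t₀ * v - ψ v) u₀ = 0 := hloc.deriv_eq_zero
    have hder : deriv (fun v => t₀ * v - ψ v) u₀ = t₀ - deriv ψ u₀ := by
      have hh : HasDerivAt (fun v => t₀ * v - ψ v) (t₀ - deriv ψ u₀) u₀ := by
        have h1 : HasDerivAt (fun v => t₀ * v) t₀ u₀ := by
          simpa using (hasDerivAt_id u₀).const_mul t₀
        exact h1.sub (hψdiff u₀ h).hasDerivAt
      exact hh.deriv
    have ht₀eq : t₀ = deriv ψ u₀ := by rw [hder] at hd0; linarith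
    obtain ⟨-, hd2, hd3⟩ := nice u₀ h
    rw [h2φ, h3φ, ht₀eq, hd2, hd3, ← h3ψ, ← h2ψ]
    set dd := iteratedDeriv 2 ψ u₀ with hdd
    set e3 := iteratedDeriv 3 ψ u₀ with he3
    have hddp : 0 < dd := hψ'' u₀ h
    have hb := hsc u₀ h
    have habs : |(-e3) / dd ^ 3| = |e3| / dd ^ 3 := by
      rw [abs_div, abs_neg, abs_of_pos (pow_pos hddp 3)]
    rw [habs]
    have hstep : |e3| / dd ^ 3 ≤ c * dd ^ ((3:ℝ)/2) / dd ^ 3 := by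
      apply div_le_div_of_nonneg_right hb (by positivity)
    have keyeq : c * dd ^ ((3:ℝ)/2) / dd ^ 3 = c * dd⁻¹ ^ ((3:ℝ)/2) := by
      rw [Real.inv_rpow hddp.le, div_eq_mul_inv, mul_assoc]
      congr 1
      rw [← Real.rpow_natCast dd 3, ← Real.rpow_neg hddp.le, ← Real.rpow_add hddp,
        ← Real.rpow_neg hddp.le]
      norm_num
    calc |e3| / dd ^ 3 ≤ c * dd ^ ((3:ℝ)/2) / dd ^ 3 := hstep
      _ = c * dd⁻¹ ^ ((3:ℝ)/2) := keyeq
  · -- boundary / exterior case : φ vanishes on a ray from t₀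
    have hC3 := hφdiff t₀ h
    -- interior of D is nonempty near deriv ψ u₀ — not needed; we only need the one-sided dichotomy
    have hside : (∀ s, t₀ < s → s ∉ D) ∨ (∀ s, s < t₀ → s ∉ D) := by
      by_contra hcon
      push_neg at hcon
      obtain ⟨⟨s₂, hs₂, hs₂D⟩, ⟨s₁, hs₁, hs₁D⟩⟩ := hcon
      apply hint
      have hIcc : Icc s₁ s₂ ⊆ D := hDconv.ordConnected.out hs₁D hs₂D
      exact mem_interior.mpr ⟨Ioo s₁ s₂, fun x hx => hIcc (Ioo_subset_Icc_self hx),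
        isOpen_Ioo, ⟨hs₁, hs₂⟩⟩
    have final : iteratedDeriv 2 φ t₀ = 0 ∧ iteratedDeriv 3 φ t₀ = 0 := by
      rcases hside with hs | hs
      · apply aux_right φ t₀ hC3
        intro s hgt
        rw [hφ]
        exact Real.sSup_of_not_bddAbove (hs s hgt)
      · apply aux_left φ t₀ hC3
        intro s hlt
        rw [hφ]
        exact Real.sSup_of_not_bddAbove (hs s hlt)
    rw [final.1, final.2]
    rw [Real.zero_rpow (by norm_num)]
    simp
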